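/- arXiv:2110.13475 — 2 statements merged into one kernel-verified Lean document; each statement's English description precedes it below -/
import Mathlib

section
/- Let P, Q, P′, Q′ be real symmetric positive definite n×n matrices. Then there exists an invertible real n×n matrix M with M P Mᵀ = P′ and M Q Mᵀ = Q′ if and only if the characteristic polynomial of P⁻¹Q equals the characteristic polynomial of P′⁻¹Q′ (equivalently, P⁻¹Q and P′⁻¹Q′ have the same eigenvalues counted with multiplicity). In other words, the vector-valued distance is a complete invariant of pairs of points of SPD_n under the isometry action P ↦ M P Mᵀ of GL(n,ℝ). -/
open Matrix Polynomial
open scoped MatrixOrder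

variable {n : ℕ}

lemma charpoly_conj (N N' A : Matrix (Fin n) (Fin n) ℝ) (h : N * N' = 1) :
    (N * A * N').charpoly = A.charpoly := by
  have key : (C.mapMatrix N) * charmatrix A * (C.mapMatrix N') = charmatrix (N * A * N') := by
    unfold charmatrix
    rw [mul_sub, sub_mul]
    congr 1
    · rw [mul_assoc, (scalar_commute (X : ℝ[X]) (fun r => Commute.all _ _) _).eq,
        ← mul_assoc, ← _root_.map_mul, h, _root_.map_one, one_mul]
    · rw [← _root_.map_mul, ← _root_.map_mul]
  have hdet : (C.mapMatrix N).det * (C.mapMatrix N').det = 1 := by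
    rw [← det_mul, ← _root_.map_mul, h, _root_.map_one, det_one]
  rw [Matrix.charpoly, Matrix.charpoly, ← key, det_mul, det_mul, mul_right_comm, hdet, one_mul]

lemma charpoly_diag (d : Fin n → ℝ) :
    (Matrix.diagonal d).charpoly = ∏ i, (X - C (d i)) := by
  have : charmatrix (Matrix.diagonal d) = Matrix.diagonal fun i => (X : ℝ[X]) - C (d i) := by
    ext i j
    rcases eq_or_ne i j with rfl | hij
    · simp
    · simp [hij, Matrix.diagonal_apply_ne _ hij]
  rw [Matrix.charpoly, this, Matrix.det_diagonal]

lemma exists_perm (f g : Fin n → ℝ)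
    (h : Multiset.map f Finset.univ.val = Multiset.map g Finset.univ.val) :
    ∃ σ : Equiv.Perm (Fin n), f ∘ σ = g := by
  have hperm : (List.ofFn f).Perm (List.ofFn g) := by
    rw [← Multiset.coe_eq_coe, ← Fin.univ_val_map, ← Fin.univ_val_map]
    exact h
  have key : f ∘ Tuple.sort f = g ∘ Tuple.sort g :=
    List.ofFn_injective <|
      List.Perm.eq_of_sortedLE
        (Tuple.monotone_sort f).sortedLE_ofFn (Tuple.monotone_sort g).sortedLE_ofFn
        (((Tuple.sort f).ofFn_comp_perm f).trans
          (hperm.trans ((Tuple.sort g).ofFn_comp_perm g).symm))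
  refine ⟨(Tuple.sort g).symm.trans (Tuple.sort f), ?_⟩
  funext i
  have := congrFun key ((Tuple.sort g).symm i)
  simpa using this

lemma perm_diag_conj (a : Fin n → ℝ) (σ : Equiv.Perm (Fin n)) :
    ∃ E : Matrix (Fin n) (Fin n) ℝ, E * Eᵀ = 1 ∧
      E * Matrix.diagonal a * Eᵀ = Matrix.diagonal (a ∘ σ) := by
  refine ⟨(1 : Matrix (Fin n) (Fin n) ℝ).submatrix σ _root_.id, ?_, ?_⟩
  · rw [transpose_submatrix, transpose_one]
    have := Matrix.submatrix_mul_equiv (1 : Matrix (Fin n) (Fin n) ℝ)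
      (1 : Matrix (Fin n) (Fin n) ℝ) ⇑σ (Equiv.refl (Fin n)) ⇑σ
    simpa using this
  · rw [transpose_submatrix, transpose_one]
    have h1 := Matrix.submatrix_mul_equiv (1 : Matrix (Fin n) (Fin n) ℝ)
      (Matrix.diagonal a) ⇑σ (Equiv.refl (Fin n)) _root_.id
    have h2 := Matrix.submatrix_mul_equiv (Matrix.diagonal a)
      (1 : Matrix (Fin n) (Fin n) ℝ) ⇑σ (Equiv.refl (Fin n)) ⇑σ
    simp only [Equiv.coe_refl, Matrix.submatrix_id_id, one_mul, mul_one] at h1 h2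
    rw [h1, h2, Matrix.submatrix_diagonal_equiv]

lemma herm_cong {A B : Matrix (Fin n) (Fin n) ℝ} (hA : A.IsHermitian) (hB : B.IsHermitian)
    (h : A.charpoly = B.charpoly) :
    ∃ O : Matrix (Fin n) (Fin n) ℝ, O * Oᵀ = 1 ∧ O * A * Oᵀ = B := by
  classical
  set U : Matrix (Fin n) (Fin n) ℝ := ↑(hA.eigenvectorUnitary) with hUdef
  set V : Matrix (Fin n) (Fin n) ℝ := ↑(hB.eigenvectorUnitary) with hVdef
  set a := hA.eigenvalues with ha
  set b := hB.eigenvalues with hb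
  have hU1 : U * Uᵀ = 1 := by
    have := (Matrix.mem_unitaryGroup_iff).mp hA.eigenvectorUnitary.2
    simpa [Matrix.star_eq_conjTranspose,
      Matrix.conjTranspose_eq_transpose_of_trivial] using this
  have hU2 : Uᵀ * U = 1 := mul_eq_one_comm.mp hU1
  have hV1 : V * Vᵀ = 1 := by
    have := (Matrix.mem_unitaryGroup_iff).mp hB.eigenvectorUnitary.2
    simpa [Matrix.star_eq_conjTranspose,
      Matrix.conjTranspose_eq_transpose_of_trivial] using this
  have hV2 : Vᵀ * V = 1 := mul_eq_one_comm.mp hV1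
  have hAspec : A = U * Matrix.diagonal a * Uᵀ := by
    have := hA.spectral_theorem
    simpa [RCLike.ofReal_real_eq_id, Matrix.star_eq_conjTranspose,
      Matrix.conjTranspose_eq_transpose_of_trivial] using this
  have hBspec : B = V * Matrix.diagonal b * Vᵀ := by
    have := hB.spectral_theorem
    simpa [RCLike.ofReal_real_eq_id, Matrix.star_eq_conjTranspose,
      Matrix.conjTranspose_eq_transpose_of_trivial] using this
  -- equal multisets of eigenvalues
  have hcp : (Matrix.diagonal a).charpoly = (Matrix.diagonal b).charpoly := by
    have hcp' := h
    rw [hAspec, hBspec, charpoly_conj U Uᵀ _ hU1, charpoly_conj V Vᵀ _ hV1] at hcp'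
    exact hcp'
  have hmult : Multiset.map a Finset.univ.val = Multiset.map b Finset.univ.val := by
    have h1 : ((Multiset.map a Finset.univ.val).map fun x => X - C x).prod
        = ((Multiset.map b Finset.univ.val).map fun x => X - C x).prod := by
      rw [Multiset.map_map, Multiset.map_map]
      simpa [charpoly_diag, Finset.prod] using hcp
    have := congrArg Polynomial.roots h1
    rwa [roots_multiset_prod_X_sub_C, roots_multiset_prod_X_sub_C] at this
  obtain ⟨σ, hσ⟩ := exists_perm a b hmult
  obtain ⟨E, hE1, hE2⟩ := perm_diag_conj a σ
  rw [hσ] at hE2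
  refine ⟨V * E * Uᵀ, ?_, ?_⟩
  · calc V * E * Uᵀ * (V * E * Uᵀ)ᵀ
        = V * (E * (Uᵀ * U) * Eᵀ) * Vᵀ := by
          simp only [transpose_mul, transpose_transpose, Matrix.mul_assoc]
    _ = 1 := by rw [hU2, mul_one, hE1, mul_one, hV1]
  · calc V * E * Uᵀ * A * (V * E * Uᵀ)ᵀ
        = V * (E * ((Uᵀ * U) * Matrix.diagonal a * (Uᵀ * U)) * Eᵀ) * Vᵀ := by
          rw [hAspec]
          simp only [transpose_mul, transpose_transpose, Matrix.mul_assoc]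
    _ = B := by rw [hU2, one_mul, mul_one, hE2, ← hBspec]

lemma sqrt_facts {P : Matrix (Fin n) (Fin n) ℝ} (hP : P.PosDef) :
    CFC.sqrt P * CFC.sqrt P = P ∧ (CFC.sqrt P)ᵀ = CFC.sqrt P ∧
      IsUnit (CFC.sqrt P).det := by
  refine ⟨CFC.sqrt_mul_sqrt_self P hP.posSemidef.nonneg, ?_, ?_⟩
  · have := (CFC.sqrt_nonneg P).posSemidef.isHermitian
    rwa [Matrix.IsHermitian, Matrix.conjTranspose_eq_transpose_of_trivial] at this
  · have hdet : (CFC.sqrt P).det * (CFC.sqrt P).det = P.det := by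
      rw [← det_mul, CFC.sqrt_mul_sqrt_self P hP.posSemidef.nonneg]
    have : (CFC.sqrt P).det ≠ 0 := by
      intro h0
      rw [h0, mul_zero] at hdet
      exact (hP.det_pos.ne' hdet.symm).elim
    exact isUnit_iff_ne_zero.mpr this

/-- The vector-valued distance is a complete invariant of pairs of points of `SPD_n` under
the isometry action `P ↦ M P Mᵀ` of `GL(n, ℝ)`: two pairs of symmetric positive definite
matrices can be mapped to one another by some invertible `M` if and only if `P⁻¹ Q` and
`P′⁻¹ Q′` have the same characteristic polynomial (i.e. the same eigenvalues with
multiplicity). -/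
theorem vvd_complete_invariant {n : ℕ}
    (P Q P' Q' : Matrix (Fin n) (Fin n) ℝ)
    (hP : P.PosDef) (hQ : Q.PosDef) (hP' : P'.PosDef) (hQ' : Q'.PosDef) :
    (∃ M : Matrix (Fin n) (Fin n) ℝ, IsUnit M ∧ M * P * Mᵀ = P' ∧ M * Q * Mᵀ = Q')
      ↔ (P⁻¹ * Q).charpoly = (P'⁻¹ * Q').charpoly := by
  constructor
  · rintro ⟨M, hM, h1, h2⟩
    have hMdet : IsUnit M.det := (Matrix.isUnit_iff_isUnit_det M).mp hM
    have hMtdet : IsUnit Mᵀ.det := by rwa [Matrix.det_transpose]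
    have hinv : P'⁻¹ * Q' = (Mᵀ)⁻¹ * (P⁻¹ * Q) * Mᵀ := by
      rw [← h1, ← h2, Matrix.mul_inv_rev, Matrix.mul_inv_rev]
      simp only [Matrix.mul_assoc]
      rw [Matrix.nonsing_inv_mul_cancel_left _ _ hMdet]
    rw [hinv, charpoly_conj _ _ _ (Matrix.nonsing_inv_mul Mᵀ hMtdet)]
  · intro h
    obtain ⟨hs2, hst, hsdet⟩ := sqrt_facts hP
    obtain ⟨hs'2, hs't, hs'det⟩ := sqrt_facts hP'
    set s := CFC.sqrt P with hsdef
    set s' := CFC.sqrt P' with hs'def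
    set R := s⁻¹ * Q * s⁻¹ with hRdef
    set R' := s'⁻¹ * Q' * s'⁻¹ with hR'def
    have hQt : Qᵀ = Q := by
      have := hQ.isHermitian
      rwa [Matrix.IsHermitian, Matrix.conjTranspose_eq_transpose_of_trivial] at this
    have hQ't : Q'ᵀ = Q' := by
      have := hQ'.isHermitian
      rwa [Matrix.IsHermitian, Matrix.conjTranspose_eq_transpose_of_trivial] at this
    have hPinv : P⁻¹ = s⁻¹ * s⁻¹ := by rw [← hs2, Matrix.mul_inv_rev]
    have hP'inv : P'⁻¹ = s'⁻¹ * s'⁻¹ := by rw [← hs'2, Matrix.mul_inv_rev]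
    have hRconj : s * (P⁻¹ * Q) * s⁻¹ = R := by
      rw [hPinv]
      simp only [← Matrix.mul_assoc]
      rw [Matrix.mul_nonsing_inv _ hsdet, one_mul]
    have hR'conj : s' * (P'⁻¹ * Q') * s'⁻¹ = R' := by
      rw [hP'inv]
      simp only [← Matrix.mul_assoc]
      rw [Matrix.mul_nonsing_inv _ hs'det, one_mul]
    have hcpR : R.charpoly = R'.charpoly := by
      rw [← hRconj, ← hR'conj, charpoly_conj _ _ _ (Matrix.mul_nonsing_inv _ hsdet),
        charpoly_conj _ _ _ (Matrix.mul_nonsing_inv _ hs'det), h]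
    have hRH : R.IsHermitian := by
      show Rᴴ = R
      rw [Matrix.conjTranspose_eq_transpose_of_trivial, hRdef, transpose_mul, transpose_mul,
        transpose_nonsing_inv, hst, hQt, Matrix.mul_assoc]
    have hR'H : R'.IsHermitian := by
      show R'ᴴ = R'
      rw [Matrix.conjTranspose_eq_transpose_of_trivial, hR'def, transpose_mul, transpose_mul,
        transpose_nonsing_inv, hs't, hQ't, Matrix.mul_assoc]
    obtain ⟨O, hO1, hO2⟩ := herm_cong hRH hR'H hcpR
    refine ⟨s' * O * s⁻¹, ?_, ?_, ?_⟩
    · have hOu : IsUnit O := IsUnit.of_mul_eq_one _ hO1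
      have hs'u : IsUnit s' := (Matrix.isUnit_iff_isUnit_det s').mpr hs'det
      have hsiu : IsUnit s⁻¹ := IsUnit.of_mul_eq_one _ (Matrix.nonsing_inv_mul _ hsdet)
      exact (hs'u.mul hOu).mul hsiu
    · have hMt : (s' * O * s⁻¹)ᵀ = s⁻¹ * Oᵀ * s' := by
        rw [transpose_mul, transpose_mul, transpose_nonsing_inv, hst, hs't, Matrix.mul_assoc]
      rw [hMt]
      have keyP : ∀ X : Matrix (Fin n) (Fin n) ℝ, s⁻¹ * (P * (s⁻¹ * X)) = X := by
        intro X
        rw [← hs2]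
        simp only [← Matrix.mul_assoc]
        rw [Matrix.nonsing_inv_mul _ hsdet, one_mul, Matrix.mul_nonsing_inv _ hsdet, one_mul]
      have hO1' : ∀ X : Matrix (Fin n) (Fin n) ℝ, O * (Oᵀ * X) = X := by
        intro X
        rw [← Matrix.mul_assoc, hO1, one_mul]
      simp only [Matrix.mul_assoc]
      rw [keyP, hO1']
      exact hs'2
    · have hMt : (s' * O * s⁻¹)ᵀ = s⁻¹ * Oᵀ * s' := by
        rw [transpose_mul, transpose_mul, transpose_nonsing_inv, hst, hs't, Matrix.mul_assoc]
      rw [hMt]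
      have keyQ : ∀ X : Matrix (Fin n) (Fin n) ℝ, s⁻¹ * (Q * (s⁻¹ * X)) = R * X := by
        intro X
        rw [hRdef]
        simp only [Matrix.mul_assoc]
      have hO2' : ∀ X : Matrix (Fin n) (Fin n) ℝ, O * (R * (Oᵀ * X)) = R' * X := by
        intro X
        rw [← hO2]
        simp only [Matrix.mul_assoc]
      simp only [Matrix.mul_assoc]
      rw [keyQ, hO2', hR'def]
      simp only [Matrix.mul_assoc]
      rw [Matrix.nonsing_inv_mul _ hs'det, mul_one, Matrix.mul_nonsing_inv_cancel_left _ _ hs'det]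
end

section
/- Let N be a norm on ℝⁿ that is invariant under every permutation of the coordinates. For real symmetric positive definite n×n matrices P, Q, define d(P,Q) = N(d_vv(P,Q)), where d_vv(P,Q) is the vector of logarithms of the eigenvalues of (√P)⁻¹ Q (√P)⁻¹ sorted in decreasing order. Then d is a metric on SPD_n: d(P,Q) ≥ 0 with d(P,Q) = 0 if and only if P = Q; d(P,Q) = d(Q,P); and d(P,R) ≤ d(P,Q) + d(Q,R) for all P, Q, R ∈ SPD_n. -/
open Matrix

namespace Matrix.PosSemidef

open scoped ComplexOrder

/-- The positive semidefinite square root of a positive semidefinite matrix (the definition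
removed from Mathlib, restored here with its old meaning). -/
noncomputable def sqrt {𝕜 : Type*} [RCLike 𝕜] {n : Type*} [Fintype n] [DecidableEq n]
    {A : Matrix n n 𝕜} (hA : A.PosSemidef) : Matrix n n 𝕜 :=
  hA.1.eigenvectorUnitary.1 * diagonal ((↑) ∘ (√·) ∘ hA.1.eigenvalues) *
  (star hA.1.eigenvectorUnitary : Matrix n n 𝕜)

lemma isHermitian_sqrt {𝕜 : Type*} [RCLike 𝕜] {n : Type*} [Fintype n] [DecidableEq n]
    {A : Matrix n n 𝕜} (hA : A.PosSemidef) : hA.sqrt.IsHermitian := by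
  have h : star (((↑) : ℝ → 𝕜) ∘ (√·) ∘ hA.1.eigenvalues) =
      ((↑) : ℝ → 𝕜) ∘ (√·) ∘ hA.1.eigenvalues :=
    funext fun i => RCLike.conj_ofReal _
  unfold sqrt
  simp only [Matrix.IsHermitian, conjTranspose_mul, diagonal_conjTranspose, Matrix.mul_assoc, h]
  rw [← star_eq_conjTranspose, ← star_eq_conjTranspose, star_star]

end Matrix.PosSemidef

/-- The matrix `(√P)⁻¹ Q (√P)⁻¹` is Hermitian (i.e. real symmetric). -/
lemma sqrtConj_isHermitian {n : ℕ} {P Q : Matrix (Fin n) (Fin n) ℝ}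
    (hP : P.PosDef) (hQ : Q.PosDef) :
    ((hP.posSemidef.sqrt)⁻¹ * Q * (hP.posSemidef.sqrt)⁻¹).IsHermitian := by
  have hs : ((hP.posSemidef.sqrt)⁻¹).IsHermitian :=
    hP.posSemidef.isHermitian_sqrt.inv
  have hq : Q.IsHermitian := hQ.isHermitian
  simp only [Matrix.IsHermitian, conjTranspose_mul, hs.eq, hq.eq, Matrix.mul_assoc]

/-- The vector-valued distance between two symmetric positive definite matrices: the vector
of logarithms of the eigenvalues of `(√P)⁻¹ Q (√P)⁻¹`.  (The eigenvalues are listed in the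
order provided by the spectral theorem; since the norm `N` below is assumed invariant under
all permutations of coordinates, this agrees with the decreasingly sorted convention.) -/
noncomputable def dvv {n : ℕ} (P Q : Matrix (Fin n) (Fin n) ℝ)
    (hP : P.PosDef) (hQ : Q.PosDef) : Fin n → ℝ :=
  fun i => Real.log ((sqrtConj_isHermitian hP hQ).eigenvalues i)

namespace Matrix.PosSemidef

lemma sqrt_mul_self {m : ℕ} {A : Matrix (Fin m) (Fin m) ℝ} (hA : A.PosSemidef) :
    hA.sqrt * hA.sqrt = A := by
  have hU : (star hA.1.eigenvectorUnitary : Matrix (Fin m) (Fin m) ℝ) *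
      (hA.1.eigenvectorUnitary : Matrix (Fin m) (Fin m) ℝ) = 1 := Unitary.coe_star_mul_self _
  conv_rhs => rw [hA.1.spectral_theorem, Unitary.conjStarAlgAut_apply]
  unfold sqrt
  simp only [Matrix.mul_assoc]
  rw [← Matrix.mul_assoc (star _ : Matrix (Fin m) (Fin m) ℝ), hU, Matrix.one_mul,
    ← Matrix.mul_assoc (diagonal _), diagonal_mul_diagonal]
  congr 3
  funext i
  simp [Real.mul_self_sqrt (hA.eigenvalues_nonneg i)]

end Matrix.PosSemidef

section Infra
open Finset

namespace VVD

variable {n : ℕ}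

lemma norm_nonneg' (N : (Fin n → ℝ) → ℝ)
    (hN0 : ∀ v, N v = 0 ↔ v = 0)
    (hNsmul : ∀ (a : ℝ) (v : Fin n → ℝ), N (a • v) = |a| * N v)
    (hNadd : ∀ u v, N (u + v) ≤ N u + N v) (v : Fin n → ℝ) : 0 ≤ N v := by
  have h1 : N 0 = 0 := (hN0 0).mpr rfl
  have h2 : N (-v) = N v := by
    have := hNsmul (-1) v
    simpa using this
  have h3 := hNadd v (-v)
  rw [add_neg_cancel, h1, h2] at h3
  linarith

lemma norm_neg' (N : (Fin n → ℝ) → ℝ)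
    (hNsmul : ∀ (a : ℝ) (v : Fin n → ℝ), N (a • v) = |a| * N v)
    (v : Fin n → ℝ) : N (-v) = N v := by
  have := hNsmul (-1) v
  simpa using this

lemma convexOn_norm' (N : (Fin n → ℝ) → ℝ)
    (hNsmul : ∀ (a : ℝ) (v : Fin n → ℝ), N (a • v) = |a| * N v)
    (hNadd : ∀ u v, N (u + v) ≤ N u + N v) :
    ConvexOn ℝ Set.univ N := by
  refine ⟨convex_univ, fun u _ v _ p q hp hq hpq => ?_⟩
  calc N (p • u + q • v) ≤ N (p • u) + N (q • v) := hNadd _ _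
  _ = p * N u + q * N v := by
      rw [hNsmul, hNsmul, abs_of_nonneg hp, abs_of_nonneg hq]
  _ = p • N u + q • N v := rfl

lemma strictMono_nat_bound {m : ℕ} (g : Fin m → ℕ) (hg : StrictMono g)
    (hlt : ∀ j, g j < n) (j : Fin m) : g j ≤ n - m + j := by
  have key : ∀ d (j : Fin m) (h : (j : ℕ) + d < m), g j + d ≤ g ⟨(j : ℕ) + d, h⟩ := by
    intro d
    induction d with
    | zero => intro j h; simp
    | succ d ih =>
      intro j h
      have h' : (j : ℕ) + d < m := by omega
      have h1 := ih j h'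
      have h2 : g ⟨(j : ℕ) + d, h'⟩ < g ⟨(j : ℕ) + (d + 1), h⟩ := by
        apply hg
        simp [Fin.lt_def]
      omega
  have hm : 0 < m := j.pos
  have h2 : (j : ℕ) + (m - 1 - (j : ℕ)) < m := by omega
  have h3 := key (m - 1 - (j : ℕ)) j h2
  have h4 := hlt ⟨(j : ℕ) + (m - 1 - (j : ℕ)), h2⟩
  omega

lemma filter_le_eq_image (t : ℕ) (ht : t ≤ n) :
    univ.filter (fun j : Fin n => t ≤ (j : ℕ)) =
      univ.image (fun j : Fin (n - t) => (⟨t + (j : ℕ), by omega⟩ : Fin n)) := by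
  ext i
  simp only [mem_filter, mem_univ, true_and, mem_image]
  constructor
  · intro h
    exact ⟨⟨(i : ℕ) - t, by omega⟩, by ext; simp; omega⟩
  · rintro ⟨j, rfl⟩
    simp

lemma filter_le_card (t : ℕ) (ht : t ≤ n) :
    (univ.filter (fun j : Fin n => t ≤ (j : ℕ))).card = n - t := by
  rw [filter_le_eq_image t ht, Finset.card_image_of_injective]
  · simp
  · intro i j hij
    have : t + (i : ℕ) = t + (j : ℕ) := congrArg Fin.val hij
    exact Fin.ext (by omega)

/-- Sum of `v` over any subset is at most the corresponding top block of the sorted tuple. -/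
lemma sum_subset_le_sorted (v : Fin n → ℝ) (S : Finset (Fin n)) :
    ∑ i ∈ S, v i ≤
      ∑ j ∈ univ.filter (fun j : Fin n => n - S.card ≤ (j : ℕ)), (v ∘ Tuple.sort v) j := by
  classical
  set vs := v ∘ Tuple.sort v with hvs
  have hmono : Monotone vs := Tuple.monotone_sort v
  set m := S.card with hm
  have hmn : m ≤ n := by
    simpa using Finset.card_le_card (Finset.subset_univ S)
  -- move to sorted coordinates
  set S' : Finset (Fin n) := S.image (Tuple.sort v).symm with hS'
  have hcard' : S'.card = m := Finset.card_image_of_injective _ (Equiv.injective _)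
  have hsum' : ∑ i ∈ S, v i = ∑ i ∈ S', vs i := by
    rw [hS', Finset.sum_image (fun _ _ _ _ h => Equiv.injective _ h)]
    apply Finset.sum_congr rfl
    intro i _
    simp [hvs]
  rw [hsum']
  -- order embedding of S'
  have e1 := S'.orderEmbOfFin hcard'
  have himg : univ.image (S'.orderEmbOfFin hcard') = S' := by
    apply Finset.coe_injective
    rw [Finset.coe_image, Finset.coe_univ, Set.image_univ, Finset.range_orderEmbOfFin]
  have hsum2 : ∑ i ∈ S', vs i = ∑ j : Fin m, vs (S'.orderEmbOfFin hcard' j) := by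
    have h := Finset.sum_image (s := (univ : Finset (Fin m))) (f := vs)
      (g := fun j => S'.orderEmbOfFin hcard' j)
      (fun a _ b _ h => (S'.orderEmbOfFin hcard').injective h)
    rw [himg] at h
    exact h
  have himg2 := filter_le_eq_image (n := n) (n - m) (by omega)
  have hinj2 : Function.Injective (fun j : Fin (n - (n - m)) => (⟨(n - m) + (j : ℕ), by omega⟩ : Fin n)) := by
    intro i j hij
    have : (n - m) + (i : ℕ) = (n - m) + (j : ℕ) := congrArg Fin.val hij
    exact Fin.ext (by omega)
  have hsum3 : ∑ j ∈ univ.filter (fun j : Fin n => n - m ≤ (j : ℕ)), vs j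
      = ∑ j : Fin (n - (n - m)), vs ⟨(n - m) + (j : ℕ), by omega⟩ := by
    rw [himg2, Finset.sum_image (f := vs) (fun a _ b _ h => hinj2 h)]
  have hcast : m = n - (n - m) := by omega
  have hsum4 : ∑ j : Fin (n - (n - m)), vs ⟨(n - m) + (j : ℕ), by omega⟩
      = ∑ j : Fin m, vs ⟨(n - m) + (j : ℕ), by omega⟩ := by
    rw [← Fin.sum_congr' _ hcast]
    apply Finset.sum_congr rfl
    intro j _
    congr 1
  rw [hsum2, hsum3, hsum4]
  apply Finset.sum_le_sum
  intro j _
  apply hmono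
  have hb := strictMono_nat_bound (fun j => ((S'.orderEmbOfFin hcard' j : Fin n) : ℕ))
    (fun a b hab => (S'.orderEmbOfFin hcard').strictMono hab) (fun j => (S'.orderEmbOfFin hcard' j).isLt) j
  simp only [Fin.le_def]
  simpa using hb


lemma abel_le (m : ℕ) (c x y : ℕ → ℝ)
    (hc : ∀ i, i + 1 < m → c i ≤ c (i + 1))
    (hsuf : ∀ k, ∑ i ∈ Finset.Ico k m, x i ≤ ∑ i ∈ Finset.Ico k m, y i)
    (heq : ∑ i ∈ Finset.range m, x i = ∑ i ∈ Finset.range m, y i) :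
    ∑ i ∈ Finset.range m, c i * x i ≤ ∑ i ∈ Finset.range m, c i * y i := by
  rcases Nat.eq_zero_or_pos m with rfl | hm
  · simp
  set d : ℕ → ℝ := fun i => y i - x i with hd
  set D : ℕ → ℝ := fun k => ∑ i ∈ Finset.Ico k m, d i with hD
  have hD0 : D 0 = 0 := by
    simp only [hD, hd, Finset.sum_sub_distrib]
    rw [Nat.Ico_zero_eq_range, heq]
    ring
  have hDnn : ∀ k, 0 ≤ D k := by
    intro k
    simp only [hD, hd, Finset.sum_sub_distrib]
    have := hsuf k
    linarith
  have hDm : D m = 0 := by simp [hD]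
  have hstep : ∀ i, i < m → d i = D i - D (i + 1) := by
    intro i hi
    have h1 : ∑ j ∈ Finset.Ico i m, d j = d i + ∑ j ∈ Finset.Ico (i + 1) m, d j :=
      Finset.sum_eq_sum_Ico_succ_bot hi d
    simp only [hD]
    linarith [h1]
  obtain ⟨m', rfl⟩ : ∃ m', m = m' + 1 := ⟨m - 1, by omega⟩
  have hA : ∑ i ∈ Finset.range (m' + 1), c i * D i
      = (∑ i ∈ Finset.range m', c (i + 1) * D (i + 1)) + c 0 * D 0 :=
    Finset.sum_range_succ' _ _
  have hB : ∑ i ∈ Finset.range (m' + 1), c i * D (i + 1)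
      = (∑ i ∈ Finset.range m', c i * D (i + 1)) + c m' * D (m' + 1) :=
    Finset.sum_range_succ _ _
  have hsplit : ∑ i ∈ Finset.range (m' + 1), c i * d i
      = ∑ i ∈ Finset.range (m' + 1), c i * D i - ∑ i ∈ Finset.range (m' + 1), c i * D (i + 1) := by
    rw [← Finset.sum_sub_distrib]
    apply Finset.sum_congr rfl
    intro i hi
    rw [hstep i (Finset.mem_range.mp hi)]
    ring
  have hpos : 0 ≤ ∑ i ∈ Finset.range m', (c (i + 1) - c i) * D (i + 1) := by
    apply Finset.sum_nonneg
    intro i hi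
    have hi' : i + 1 < m' + 1 := by simpa using Finset.mem_range.mp hi
    exact mul_nonneg (by linarith [hc i hi']) (hDnn _)
  have hS : ∑ i ∈ Finset.range m', (c (i + 1) - c i) * D (i + 1)
      = ∑ i ∈ Finset.range m', c (i + 1) * D (i + 1) - ∑ i ∈ Finset.range m', c i * D (i + 1) := by
    rw [← Finset.sum_sub_distrib]
    apply Finset.sum_congr rfl
    intros; ring
  have hfinal : 0 ≤ ∑ i ∈ Finset.range (m' + 1), c i * d i := by
    rw [hsplit, hA, hB, hD0, hDm]
    rw [hS] at hpos
    linarith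
  have hgoal : ∑ i ∈ Finset.range (m' + 1), c i * d i
      = ∑ i ∈ Finset.range (m' + 1), c i * y i - ∑ i ∈ Finset.range (m' + 1), c i * x i := by
    rw [← Finset.sum_sub_distrib]
    apply Finset.sum_congr rfl
    intros; simp only [hd]; ring
  linarith [hgoal ▸ hfinal]

lemma sum_dite_Ico (w : Fin n → ℝ) (k : ℕ) :
    ∑ i ∈ Finset.Ico k n, (if h : i < n then w ⟨i, h⟩ else 0)
      = ∑ j ∈ univ.filter (fun j : Fin n => k ≤ (j : ℕ)), w j := by
  have himg : Finset.Ico k n = (univ.filter (fun j : Fin n => k ≤ (j : ℕ))).image (fun j : Fin n => (j : ℕ)) := by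
    ext t
    simp only [Finset.mem_Ico, Finset.mem_image, mem_filter, mem_univ, true_and]
    constructor
    · intro ⟨h1, h2⟩
      exact ⟨⟨t, h2⟩, h1, rfl⟩
    · rintro ⟨j, hj, rfl⟩
      exact ⟨hj, j.isLt⟩
  rw [himg, Finset.sum_image (fun a _ b _ h => Fin.ext h)]
  apply Finset.sum_congr rfl
  intro j _
  simp [j.isLt]

lemma abel_fin (c w z : Fin n → ℝ) (hc : Monotone c)
    (hsuf : ∀ k : ℕ, ∑ j ∈ univ.filter (fun j : Fin n => k ≤ (j : ℕ)), w j
        ≤ ∑ j ∈ univ.filter (fun j : Fin n => k ≤ (j : ℕ)), z j)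
    (heq : ∑ j, w j = ∑ j, z j) :
    ∑ j, c j * w j ≤ ∑ j, c j * z j := by
  classical
  set c' : ℕ → ℝ := fun i => if h : i < n then c ⟨i, h⟩ else 0 with hc'
  set w' : ℕ → ℝ := fun i => if h : i < n then w ⟨i, h⟩ else 0 with hw'
  set z' : ℕ → ℝ := fun i => if h : i < n then z ⟨i, h⟩ else 0 with hz'
  have hfilter0 : (univ.filter (fun j : Fin n => 0 ≤ (j : ℕ))) = univ :=
    Finset.filter_true_of_mem (by intros; omega)
  have h := abel_le n c' w' z'
    (by
      intro i hi
      simp only [hc']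
      rw [dif_pos (by omega : i < n), dif_pos hi]
      exact hc (by simp [Fin.le_def]))
    (by
      intro k
      rw [sum_dite_Ico w k, sum_dite_Ico z k]
      exact hsuf k)
    (by
      have h1 := sum_dite_Ico w 0
      have h2 := sum_dite_Ico z 0
      rw [Nat.Ico_zero_eq_range] at h1 h2
      rw [h1, h2, hfilter0]
      exact heq)
  have htr : ∀ u : Fin n → ℝ, ∑ i ∈ Finset.range n, c' i * (if h : i < n then u ⟨i, h⟩ else 0)
      = ∑ j, c j * u j := by
    intro u
    have h1 : ∀ i ∈ Finset.range n, c' i * (if h : i < n then u ⟨i, h⟩ else 0)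
        = (if h : i < n then c ⟨i, h⟩ * u ⟨i, h⟩ else 0) := by
      intro i hi
      have : i < n := Finset.mem_range.mp hi
      simp [hc', this]
    rw [Finset.sum_congr rfl h1]
    have h2 := sum_dite_Ico (fun j => c j * u j) 0
    rw [Nat.Ico_zero_eq_range, hfilter0] at h2
    exact h2
  have hw2 := htr w
  have hz2 := htr z
  simp only [hw', hz'] at h
  rw [hw2, hz2] at h
  exact h


lemma key_norm (N : (Fin n → ℝ) → ℝ)
    (hNsmul : ∀ (a : ℝ) (v : Fin n → ℝ), N (a • v) = |a| * N v)
    (hNadd : ∀ u v, N (u + v) ≤ N u + N v)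
    (hNperm : ∀ (σ : Equiv.Perm (Fin n)) (v : Fin n → ℝ), N (v ∘ σ) = N v)
    (x a b : Fin n → ℝ)
    (hsum : ∑ i, x i = ∑ i, a i + ∑ i, b i)
    (hsub : ∀ S : Finset (Fin n), ∃ S1 S2 : Finset (Fin n),
      S1.card = S.card ∧ S2.card = S.card ∧
      ∑ i ∈ S, x i ≤ ∑ i ∈ S1, a i + ∑ i ∈ S2, b i) :
    N x ≤ N a + N b := by
  classical
  set xs := x ∘ Tuple.sort x with hxs
  set as := a ∘ Tuple.sort a with has
  set bs := b ∘ Tuple.sort b with hbs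
  set y : Fin n → ℝ := fun j => as j + bs j with hy
  have hsx : ∀ v : Fin n → ℝ, ∑ j, (v ∘ Tuple.sort v) j = ∑ i, v i := fun v =>
    Equiv.sum_comp (Tuple.sort v) v
  have hsuf : ∀ k : ℕ, ∑ j ∈ univ.filter (fun j : Fin n => k ≤ (j : ℕ)), xs j
      ≤ ∑ j ∈ univ.filter (fun j : Fin n => k ≤ (j : ℕ)), y j := by
    intro k
    by_cases hk : k ≤ n
    · set F := univ.filter (fun j : Fin n => k ≤ (j : ℕ)) with hF
      have hFcard : F.card = n - k := filter_le_card k hk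
      set Sx : Finset (Fin n) := F.image (Tuple.sort x) with hSx
      have hSxcard : Sx.card = n - k := by
        rw [hSx, Finset.card_image_of_injective _ (Equiv.injective _), hFcard]
      have h1 : ∑ j ∈ F, xs j = ∑ i ∈ Sx, x i := by
        rw [hSx, Finset.sum_image (fun _ _ _ _ h => Equiv.injective _ h)]
        rfl
      obtain ⟨S1, S2, hc1, hc2, hle⟩ := hsub Sx
      have h2 := sum_subset_le_sorted a S1
      have h3 := sum_subset_le_sorted b S2
      rw [hc1, hSxcard] at h2
      rw [hc2, hSxcard] at h3
      have hnk : n - (n - k) = k := by omega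
      rw [hnk] at h2 h3
      have h4 : ∑ j ∈ F, y j = ∑ j ∈ F, as j + ∑ j ∈ F, bs j := by
        rw [← Finset.sum_add_distrib]
      rw [h1, h4]
      calc ∑ i ∈ Sx, x i ≤ ∑ i ∈ S1, a i + ∑ i ∈ S2, b i := hle
      _ ≤ ∑ j ∈ F, as j + ∑ j ∈ F, bs j := add_le_add h2 h3
    · have hempty : univ.filter (fun j : Fin n => k ≤ (j : ℕ)) = ∅ := by
        apply Finset.filter_false_of_mem
        intro j _
        have := j.isLt
        omega
      simp [hempty]
  have heqy : ∑ j, y j = ∑ j, as j + ∑ j, bs j := by rw [← Finset.sum_add_distrib]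
  have heq : ∑ j, xs j = ∑ j, y j := by
    rw [hsx x, heqy, hsx a, hsx b, hsum]
  have hmem : x ∈ convexHull ℝ (Set.range fun σ : Equiv.Perm (Fin n) => y ∘ σ) := by
    by_contra hx
    obtain ⟨f, u, hfK, hfx⟩ := geometric_hahn_banach_closed_point
      (convex_convexHull ℝ _) ((Set.finite_range _).isClosed_convexHull (𝕜 := ℝ)) hx
    set c : Fin n → ℝ := fun i => f (Pi.single i 1) with hc
    have hfz : ∀ z : Fin n → ℝ, f z = ∑ i, c i * z i := by
      intro z
      have hz := pi_eq_sum_univ z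
      calc f z = f (∑ i, z i • fun j => if i = j then (1:ℝ) else 0) := by rw [← hz]
      _ = ∑ i, z i • f (fun j => if i = j then (1:ℝ) else 0) := by
          rw [map_sum]
          apply Finset.sum_congr rfl
          intro i _
          rw [_root_.map_smul]
      _ = ∑ i, c i * z i := by
          apply Finset.sum_congr rfl
          intro i _
          have hps : (fun j => if i = j then (1:ℝ) else 0) = Pi.single i 1 := by
            ext j
            simp [Pi.single_apply, eq_comm]
          rw [hps, hc]
          simp [mul_comm]
    set cs := c ∘ Tuple.sort c with hcs
    have hmc : Monotone cs := Tuple.monotone_sort c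
    have e1 : f x = ∑ j, cs j * (x ∘ (Tuple.sort c)) j := by
      rw [hfz]
      exact (Equiv.sum_comp (Tuple.sort c) (fun i => c i * x i)).symm
    have e2 : ∑ j, cs j * (x ∘ Tuple.sort c) j ≤ ∑ j, cs j * xs j := by
      have hmono : Monovary cs xs := by
        intro i j hij
        rcases le_or_gt i j with h | h
        · exact hmc h
        · exact absurd hij (not_lt.mpr (Tuple.monotone_sort x h.le))
      have hre := hmono.sum_mul_comp_perm_le_sum_mul
        (σ := (Tuple.sort c).trans (Tuple.sort x).symm)
      refine le_of_eq_of_le (Finset.sum_congr rfl fun j _ => ?_) hre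
      simp [hxs, hcs]
    have e3 : ∑ j, cs j * xs j ≤ ∑ j, cs j * y j := abel_fin cs xs y hmc hsuf heq
    have e4 : ∑ j, cs j * y j = f (y ∘ (Tuple.sort c).symm) := by
      rw [hfz]
      rw [← Equiv.sum_comp (Tuple.sort c) (fun i => c i * (y ∘ (Tuple.sort c).symm) i)]
      apply Finset.sum_congr rfl
      intro j _
      simp [hcs]
    have hchain : f x ≤ f (y ∘ (Tuple.sort c).symm) := by
      rw [e1, ← e4]
      exact le_trans e2 e3
    have hlt : f (y ∘ (Tuple.sort c).symm) < u :=
      hfK _ (subset_convexHull ℝ _ ⟨(Tuple.sort c).symm, rfl⟩)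
    linarith
  obtain ⟨zz, ⟨σ, rfl⟩, hle⟩ :=
    (convexOn_norm' N hNsmul hNadd).exists_ge_of_mem_convexHull (Set.subset_univ _) hmem
  have h5 : N (y ∘ σ) = N y := hNperm σ y
  have h6 : N y ≤ N as + N bs := hNadd as bs
  have h7 : N as = N a := hNperm (Tuple.sort a) a
  have h8 : N bs = N b := hNperm (Tuple.sort b) b
  linarith


section Det

variable {k : ℕ}

lemma psd_det_nonneg {m : ℕ} {A : Matrix (Fin m) (Fin m) ℝ} (hA : A.PosSemidef) : 0 ≤ A.det := by
  exact hA.det_nonneg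

lemma conj_diag_entry (W : Matrix (Fin n) (Fin k) ℝ) (d : Fin n → ℝ) :
    Wᴴ * diagonal d * W = Matrix.of fun j => ∑ i, (d i * W i j) • (fun l => W i l) := by
  ext j l
  rw [Matrix.mul_apply]
  simp only [Matrix.mul_diagonal, Matrix.conjTranspose_apply, Matrix.of_apply,
    Finset.sum_apply, Pi.smul_apply, smul_eq_mul, star_trivial]
  apply Finset.sum_congr rfl
  intros; ring

lemma det_expand (W : Matrix (Fin n) (Fin k) ℝ) (d : Fin n → ℝ) :
    (Wᴴ * diagonal d * W).det
      = ∑ f : Fin k → Fin n,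
          (∏ j, (d (f j) * W (f j) j)) * (Matrix.of fun j l => W (f j) l).det := by
  rw [conj_diag_entry]
  have h1 : (Matrix.of fun j => ∑ i, (d i * W i j) • (fun l => W i l)).det
      = (Matrix.detRowAlternating : (Fin k → ℝ) [⋀^Fin k]→ₗ[ℝ] ℝ).toMultilinearMap
          (fun j => ∑ i, (d i * W i j) • (fun l => W i l)) := rfl
  rw [h1, MultilinearMap.map_sum]
  apply Finset.sum_congr rfl
  intro f _
  rw [MultilinearMap.map_smul_univ]
  rfl

lemma det_conj_exists (W : Matrix (Fin n) (Fin k) ℝ) (hW : Wᴴ * W = 1) :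
    ∃ c : Finset (Fin n) → ℝ,
      (∀ S ∈ Finset.univ.powersetCard k, (0:ℝ) ≤ c S) ∧
      (∑ S ∈ Finset.univ.powersetCard k, c S = 1) ∧
      (∀ d : Fin n → ℝ, (Wᴴ * diagonal d * W).det
        = ∑ S ∈ Finset.univ.powersetCard k, (∏ i ∈ S, d i) * c S) := by
  classical
  set e : (Fin k → Fin n) → ℝ :=
    fun f => (∏ j, W (f j) j) * (Matrix.of fun j l => W (f j) l).det with he
  set Inj : Finset (Fin k → Fin n) := univ.filter (fun f => Function.Injective f) with hInj
  set cc : Finset (Fin n) → ℝ := fun S => ∑ f ∈ Inj.filter (fun f => univ.image f = S), e f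
  have hexp : ∀ d : Fin n → ℝ, (Wᴴ * diagonal d * W).det
      = ∑ S ∈ Finset.univ.powersetCard k, (∏ i ∈ S, d i) * cc S := by
    intro d
    rw [det_expand]
    rw [← Finset.sum_filter_add_sum_filter_not univ (fun f => Function.Injective f)]
    have hnon : ∑ f ∈ univ.filter (fun f => ¬ Function.Injective f),
        (∏ j, (d (f j) * W (f j) j)) * (Matrix.of fun j l => W (f j) l).det = 0 := by
      apply Finset.sum_eq_zero
      intro f hf
      obtain ⟨i, j, hfij, hij⟩ := Function.not_injective_iff.mp (Finset.mem_filter.mp hf).2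
      have hdet : (Matrix.of fun j l => W (f j) l).det = 0 := by
        apply Matrix.det_zero_of_row_eq hij
        ext l
        simp [hfij]
      rw [hdet, mul_zero]
    rw [hnon, add_zero]
    have hterm : ∀ f ∈ Inj, (∏ j, (d (f j) * W (f j) j)) * (Matrix.of fun j l => W (f j) l).det
        = (∏ i ∈ univ.image f, d i) * e f := by
      intro f hf
      have hfi : Function.Injective f := (Finset.mem_filter.mp hf).2
      rw [Finset.prod_mul_distrib, Finset.prod_image (fun a _ b _ h => hfi h)]
      simp only [he]
      ring
    rw [Finset.sum_congr rfl hterm]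
    rw [← Finset.sum_fiberwise_of_maps_to (g := fun f => univ.image f)
      (t := Finset.univ.powersetCard k) ?hmaps (fun f => (∏ i ∈ univ.image f, d i) * e f)]
    case hmaps =>
      intro f hf
      rw [Finset.mem_powersetCard_univ]
      rw [Finset.card_image_of_injective _ (Finset.mem_filter.mp hf).2]
      simp
    apply Finset.sum_congr rfl
    intro S _
    rw [Finset.mul_sum]
    apply Finset.sum_congr rfl
    intro f hf
    have himg : univ.image f = S := (Finset.mem_filter.mp hf).2
    rw [himg]
  refine ⟨cc, ?_, ?_, hexp⟩
  · intro S hS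
    have hind := hexp (fun i => if i ∈ S then 1 else 0)
    have hrhs : ∑ S' ∈ Finset.univ.powersetCard k,
        (∏ i ∈ S', if i ∈ S then (1:ℝ) else 0) * cc S' = cc S := by
      rw [Finset.sum_eq_single S]
      · rw [Finset.prod_congr rfl (fun i hi => if_pos hi), Finset.prod_const_one, one_mul]
      · intro S' hS' hne
        have hcards : S'.card = S.card := by
          rw [Finset.mem_powersetCard_univ.mp hS', Finset.mem_powersetCard_univ.mp hS]
        have hnsub : ¬ S' ⊆ S := fun hsub =>
          hne (Finset.eq_of_subset_of_card_le hsub (le_of_eq hcards.symm))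
        obtain ⟨i, hiS', hiS⟩ := Finset.not_subset.mp hnsub
        have hz : (∏ i ∈ S', if i ∈ S then (1:ℝ) else 0) = 0 :=
          Finset.prod_eq_zero hiS' (if_neg hiS)
        rw [hz, zero_mul]
      · intro h
        exact absurd hS h
    rw [← hrhs, ← hind]
    have hpsd : ((diagonal fun i => if i ∈ S then (1:ℝ) else 0) : Matrix (Fin n) (Fin n) ℝ).PosSemidef := by
      apply posSemidef_diagonal_iff.mpr
      intro i
      split <;> norm_num
    exact psd_det_nonneg (hpsd.conjTranspose_mul_mul_same W)
  · have h1 := hexp (fun _ => 1)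
    have hdiag : (diagonal fun _ : Fin n => (1:ℝ)) = 1 := by simp [Matrix.diagonal_one]
    rw [hdiag, Matrix.mul_one, hW, Matrix.det_one] at h1
    simpa using h1.symm

/-- Compression bound: for a real symmetric matrix `M` and a frame `U`,
`det (Uᴴ M U)` is at most the product of eigenvalues over some `k`-subset. -/
lemma compression_det_le {M : Matrix (Fin n) (Fin n) ℝ} (hM : M.IsHermitian)
    {U : Matrix (Fin n) (Fin k) ℝ} (hU : Uᴴ * U = 1) (hk : k ≤ n) :
    ∃ S : Finset (Fin n), S.card = k ∧
      (Uᴴ * M * U).det ≤ ∏ i ∈ S, hM.eigenvalues i := by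
  classical
  set V : Matrix (Fin n) (Fin n) ℝ := (hM.eigenvectorUnitary : Matrix (Fin n) (Fin n) ℝ) with hV
  have hspec : M = V * diagonal hM.eigenvalues * Vᴴ := by
    have h := hM.spectral_theorem
    rw [Unitary.conjStarAlgAut_apply, RCLike.ofReal_real_eq_id, Function.id_comp] at h
    rw [← Matrix.star_eq_conjTranspose]
    exact h
  have hVV : V * Vᴴ = 1 := by
    rw [← Matrix.star_eq_conjTranspose]
    exact Matrix.mem_unitaryGroup_iff.mp hM.eigenvectorUnitary.2
  set W : Matrix (Fin n) (Fin k) ℝ := Vᴴ * U with hWdef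
  have hW : Wᴴ * W = 1 := by
    rw [hWdef, Matrix.conjTranspose_mul, Matrix.conjTranspose_conjTranspose]
    calc Uᴴ * V * (Vᴴ * U) = Uᴴ * (V * Vᴴ) * U := by
          simp only [Matrix.mul_assoc]
    _ = 1 := by rw [hVV, Matrix.mul_one, hU]
  have hUMU : Uᴴ * M * U = Wᴴ * diagonal hM.eigenvalues * W := by
    rw [hWdef, Matrix.conjTranspose_mul, Matrix.conjTranspose_conjTranspose]
    conv_lhs => rw [hspec]
    simp only [Matrix.mul_assoc]
  obtain ⟨cc, hnn, hone, hexp⟩ := det_conj_exists W hW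
  obtain ⟨Smax, hSmax, hmax⟩ := Finset.exists_max_image (Finset.univ.powersetCard k)
    (fun S => ∏ i ∈ S, hM.eigenvalues i)
    (Finset.powersetCard_nonempty.mpr (by simpa using hk))
  refine ⟨Smax, Finset.mem_powersetCard_univ.mp hSmax, ?_⟩
  rw [hUMU, hexp]
  calc ∑ S ∈ Finset.univ.powersetCard k, (∏ i ∈ S, hM.eigenvalues i) * cc S
      ≤ ∑ S ∈ Finset.univ.powersetCard k, (∏ i ∈ Smax, hM.eigenvalues i) * cc S := by
        apply Finset.sum_le_sum
        intro S hS
        exact mul_le_mul_of_nonneg_right (hmax S hS) (hnn S hS)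
  _ = ∏ i ∈ Smax, hM.eigenvalues i := by rw [← Finset.mul_sum, hone, mul_one]

end Det


section Eig

open Polynomial

lemma charpoly_conj_eq {m : ℕ} (P B : Matrix (Fin m) (Fin m) ℝ) (hP : IsUnit P.det) :
    (P * B * P⁻¹).charpoly = B.charpoly := by
  classical
  set P' : Matrix (Fin m) (Fin m) ℝ[X] := P.map Polynomial.C with hP'def
  have hPP : P * P⁻¹ = 1 := Matrix.mul_nonsing_inv P hP
  have hP'inv : P' * (P⁻¹).map Polynomial.C = 1 := by
    rw [hP'def, ← Matrix.map_mul, hPP, Matrix.map_one _ (map_zero _) (map_one _)]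
  have hinv' : (P⁻¹).map Polynomial.C = P'⁻¹ := (Matrix.inv_eq_right_inv hP'inv).symm
  have hP'P : P' * P'⁻¹ = 1 := by rw [← hinv']; exact hP'inv
  have hmapmul : (P * B * P⁻¹).map Polynomial.C = P' * B.map Polynomial.C * P'⁻¹ := by
    rw [← hinv', hP'def, ← Matrix.map_mul, ← Matrix.map_mul]
  have hscalar : P' * Matrix.scalar (Fin m) (X : ℝ[X]) * P'⁻¹ = Matrix.scalar (Fin m) (X : ℝ[X]) := by
    have hcomm : Matrix.scalar (Fin m) (X : ℝ[X]) * P' = P' * Matrix.scalar (Fin m) (X : ℝ[X]) := by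
      rw [Matrix.scalar_commute]
      intro r
      exact Commute.all _ _
    rw [← hcomm, Matrix.mul_assoc, hP'P, Matrix.mul_one]
  have hcm : Matrix.charmatrix (P * B * P⁻¹) = P' * Matrix.charmatrix B * P'⁻¹ := by
    symm
    unfold Matrix.charmatrix
    simp only [RingHom.mapMatrix_apply]
    rw [Matrix.mul_sub, Matrix.sub_mul, hscalar, hmapmul]
  unfold Matrix.charpoly
  rw [hcm, Matrix.det_mul, Matrix.det_mul]
  have hdet1 : P'.det * P'⁻¹.det = 1 := by
    rw [← Matrix.det_mul, hP'P, Matrix.det_one]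
  calc P'.det * (Matrix.charmatrix B).det * P'⁻¹.det
      = (P'.det * P'⁻¹.det) * (Matrix.charmatrix B).det := by ring
  _ = (Matrix.charmatrix B).det := by rw [hdet1, one_mul]

lemma charpoly_diagonal_eq {m : ℕ} (v : Fin m → ℝ) :
    (diagonal v).charpoly
      = (Multiset.map (fun a => (X : ℝ[X]) - Polynomial.C a) (Finset.univ.val.map v)).prod := by
  classical
  have hcm : Matrix.charmatrix (diagonal v) = diagonal (fun i => (X : ℝ[X]) - Polynomial.C (v i)) := by
    apply Matrix.ext
    intro i j
    by_cases hij : i = j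
    · subst hij
      rw [Matrix.charmatrix_apply_eq, Matrix.diagonal_apply_eq, Matrix.diagonal_apply_eq]
    · rw [Matrix.charmatrix_apply_ne _ _ _ hij, Matrix.diagonal_apply_ne _ hij,
        Matrix.diagonal_apply_ne _ hij, map_zero, neg_zero]
  unfold Matrix.charpoly
  rw [hcm, Matrix.det_diagonal, Multiset.map_map, Finset.prod_eq_multiset_prod]
  rfl

lemma eig_multiset_eq_roots {m : ℕ} {A : Matrix (Fin m) (Fin m) ℝ} (hA : A.IsHermitian) :
    Finset.univ.val.map hA.eigenvalues = A.charpoly.roots := by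
  classical
  set V : Matrix (Fin m) (Fin m) ℝ := (hA.eigenvectorUnitary : Matrix (Fin m) (Fin m) ℝ) with hV
  have hVV : V * Vᴴ = 1 := by
    rw [← Matrix.star_eq_conjTranspose]
    exact Matrix.mem_unitaryGroup_iff.mp hA.eigenvectorUnitary.2
  have hVdet : IsUnit V.det := by
    apply Matrix.isUnit_det_of_right_inverse (B := Vᴴ) hVV
  have hVinv : Vᴴ = V⁻¹ := (Matrix.inv_eq_right_inv hVV).symm
  have hspec : A = V * diagonal hA.eigenvalues * V⁻¹ := by
    have h := hA.spectral_theorem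
    rw [Unitary.conjStarAlgAut_apply, RCLike.ofReal_real_eq_id, Function.id_comp] at h
    rw [← hVinv, ← Matrix.star_eq_conjTranspose]
    exact h
  have hcp : A.charpoly = (diagonal hA.eigenvalues).charpoly := by
    conv_lhs => rw [hspec]
    exact charpoly_conj_eq V _ hVdet
  rw [hcp, charpoly_diagonal_eq, Polynomial.roots_multiset_prod_X_sub_C]

lemma eig_multiset_of_conj {m : ℕ} {A : Matrix (Fin m) (Fin m) ℝ} (hA : A.IsHermitian)
    (P : Matrix (Fin m) (Fin m) ℝ) (hP : IsUnit P.det) (d : Fin m → ℝ)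
    (h : A = P * diagonal d * P⁻¹) :
    Finset.univ.val.map hA.eigenvalues = Finset.univ.val.map d := by
  rw [eig_multiset_eq_roots hA]
  have hcp : A.charpoly = (diagonal d).charpoly := by
    conv_lhs => rw [h]
    exact charpoly_conj_eq P _ hP
  rw [hcp, charpoly_diagonal_eq, Polynomial.roots_multiset_prod_X_sub_C]

lemma exists_perm_of_multiset_eq {m : ℕ} {f g : Fin m → ℝ}
    (h : Finset.univ.val.map f = Finset.univ.val.map g) :
    ∃ σ : Equiv.Perm (Fin m), f = g ∘ σ := by
  have hperm : (List.ofFn f).Perm (List.ofFn g) := by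
    rw [← Multiset.coe_eq_coe]
    simpa [Fin.univ_val_map] using h
  have hsorted : f ∘ Tuple.sort f = g ∘ Tuple.sort g := by
    apply List.ofFn_injective
    exact List.Perm.eq_of_sortedLE
      (Tuple.monotone_sort f).sortedLE_ofFn (Tuple.monotone_sort g).sortedLE_ofFn
      (((Tuple.sort f).ofFn_comp_perm f).trans
        (hperm.trans ((Tuple.sort g).ofFn_comp_perm g).symm))
  refine ⟨(Tuple.sort f).symm.trans (Tuple.sort g), ?_⟩
  funext i
  have := congrFun hsorted ((Tuple.sort f).symm i)
  simpa using this

end Eig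


section MatrixLemmas

variable {k : ℕ}

lemma unitary_facts {m : ℕ} {C : Matrix (Fin m) (Fin m) ℝ} (hC : C.IsHermitian) :
    ((hC.eigenvectorUnitary : Matrix (Fin m) (Fin m) ℝ) *
        (hC.eigenvectorUnitary : Matrix (Fin m) (Fin m) ℝ)ᴴ = 1) ∧
    ((hC.eigenvectorUnitary : Matrix (Fin m) (Fin m) ℝ)ᴴ *
        (hC.eigenvectorUnitary : Matrix (Fin m) (Fin m) ℝ) = 1) ∧
    ((hC.eigenvectorUnitary : Matrix (Fin m) (Fin m) ℝ)ᴴ * C *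
        (hC.eigenvectorUnitary : Matrix (Fin m) (Fin m) ℝ) = diagonal hC.eigenvalues) := by
  refine ⟨?_, ?_, ?_⟩
  · rw [← Matrix.star_eq_conjTranspose]
    exact Matrix.mem_unitaryGroup_iff.mp hC.eigenvectorUnitary.2
  · rw [← Matrix.star_eq_conjTranspose]
    exact Matrix.mem_unitaryGroup_iff'.mp hC.eigenvectorUnitary.2
  · have h := hC.conjStarAlgAut_star_eigenvectorUnitary
    rw [Unitary.conjStarAlgAut_apply, RCLike.ofReal_real_eq_id, Function.id_comp] at h
    rw [← Matrix.star_eq_conjTranspose]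
    simpa using h

/-- Lemma B: a frame built from eigenvectors indexed by `S` realizes `∏_{i∈S} λ_i`
as a compression determinant. -/
lemma selection_frame {m : ℕ} {C : Matrix (Fin m) (Fin m) ℝ} (hC : C.IsHermitian)
    (S : Finset (Fin m)) (hk : S.card = k) :
    ∃ U : Matrix (Fin m) (Fin k) ℝ, Uᴴ * U = 1 ∧
      (Uᴴ * C * U).det = ∏ i ∈ S, hC.eigenvalues i := by
  classical
  set e := S.orderEmbOfFin hk with he
  set V : Matrix (Fin m) (Fin m) ℝ := (hC.eigenvectorUnitary : Matrix (Fin m) (Fin m) ℝ) with hV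
  obtain ⟨hVV, hVV', hVdiag⟩ := unitary_facts hC
  set U : Matrix (Fin m) (Fin k) ℝ := V.submatrix id (fun j => e j) with hU
  have hUapp : ∀ i j, U i j = V i (e j) := fun i j => rfl
  have hUU : Uᴴ * U = 1 := by
    apply Matrix.ext
    intro j j'
    rw [Matrix.mul_apply]
    have : ∀ i, Uᴴ j i * U i j' = V i (e j) * V i (e j') := by
      intro i
      simp [Matrix.conjTranspose_apply, hUapp]
    rw [Finset.sum_congr rfl (fun i _ => this i)]
    have h2 : (Vᴴ * V) (e j) (e j') = ∑ i, V i (e j) * V i (e j') := by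
      rw [Matrix.mul_apply]
      apply Finset.sum_congr rfl
      intros i _
      simp [Matrix.conjTranspose_apply]
    rw [← h2, hVV']
    by_cases hjj : j = j'
    · subst hjj; simp [Matrix.one_apply]
    · have : e j ≠ e j' := fun hc => hjj (e.injective hc)
      simp [Matrix.one_apply, this, hjj]
  have hUCU : Uᴴ * C * U = diagonal (fun j => hC.eigenvalues (e j)) := by
    apply Matrix.ext
    intro j j'
    have h1 : (Uᴴ * C * U) j j' = (Vᴴ * C * V) (e j) (e j') := by
      simp only [Matrix.mul_apply, Matrix.conjTranspose_apply, hUapp, star_trivial]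
    rw [h1, hVdiag]
    by_cases hjj : j = j'
    · subst hjj; simp [Matrix.diagonal_apply_eq]
    · have hne : e j ≠ e j' := fun hc => hjj (e.injective hc)
      rw [Matrix.diagonal_apply_ne _ hne, Matrix.diagonal_apply_ne _ hjj]
  refine ⟨U, hUU, ?_⟩
  rw [hUCU, Matrix.det_diagonal]
  rw [← Finset.prod_image (g := fun j : Fin k => e j) (f := hC.eigenvalues)
    (fun a _ b _ hab => e.injective hab)]
  congr 1
  apply Finset.coe_injective
  rw [Finset.coe_image, Finset.coe_univ, Set.image_univ]
  exact Finset.range_orderEmbOfFin S hk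

end MatrixLemmas


section GN

variable {k : ℕ}

lemma frame_mulvec_inj {m : ℕ} {U : Matrix (Fin m) (Fin k) ℝ} (hU : Uᴴ * U = 1) :
    ∀ x : Fin k → ℝ, U *ᵥ x = 0 → x = 0 := by
  intro x hx
  have h : (Uᴴ * U) *ᵥ x = 0 := by
    rw [← Matrix.mulVec_mulVec, hx, Matrix.mulVec_zero]
  rwa [hU, Matrix.one_mulVec] at h

lemma posdef_conj {m : ℕ} {A : Matrix (Fin m) (Fin m) ℝ} (hA : A.PosDef)
    (U : Matrix (Fin m) (Fin k) ℝ) (hinj : ∀ x : Fin k → ℝ, U *ᵥ x = 0 → x = 0) :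
    (Uᴴ * A * U).PosDef := by
  exact hA.conjTranspose_mul_mul_same (fun x y h => sub_eq_zero.mp
    (hinj (x - y) (by rw [Matrix.mulVec_sub, h, sub_self])))

lemma posdef_compress {m : ℕ} {A : Matrix (Fin m) (Fin m) ℝ} (hA : A.PosDef)
    {U : Matrix (Fin m) (Fin k) ℝ} (hU : Uᴴ * U = 1) : (Uᴴ * A * U).PosDef :=
  posdef_conj hA U (frame_mulvec_inj hU)

/-- Lemma C: determinant of compression of a congruence `√A B √A` splits. -/
lemma det_decompose {m : ℕ} {A : Matrix (Fin m) (Fin m) ℝ} (hA : A.PosDef)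
    (B : Matrix (Fin m) (Fin m) ℝ)
    {U : Matrix (Fin m) (Fin k) ℝ} (hU : Uᴴ * U = 1) :
    ∃ O : Matrix (Fin m) (Fin k) ℝ, Oᴴ * O = 1 ∧
      (Uᴴ * (hA.posSemidef.sqrt * B * hA.posSemidef.sqrt) * U).det
        = (Uᴴ * A * U).det * (Oᴴ * B * O).det := by
  set SA := hA.posSemidef.sqrt with hSAdef
  have hSAH : SAᴴ = SA := hA.posSemidef.isHermitian_sqrt
  set W : Matrix (Fin m) (Fin k) ℝ := SA * U with hWdef
  have hG : Wᴴ * W = Uᴴ * A * U := by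
    rw [hWdef, Matrix.conjTranspose_mul, hSAH]
    calc Uᴴ * SA * (SA * U) = Uᴴ * (SA * SA) * U := by simp only [Matrix.mul_assoc]
    _ = Uᴴ * A * U := by rw [hA.posSemidef.sqrt_mul_self]
  have hGpd : (Uᴴ * A * U).PosDef := posdef_compress hA hU
  set Gs := hGpd.posSemidef.sqrt with hGsdef
  have hGsH : Gsᴴ = Gs := hGpd.posSemidef.isHermitian_sqrt
  have hGs2 : Gs * Gs = Uᴴ * A * U := hGpd.posSemidef.sqrt_mul_self
  have hdet2 : Gs.det * Gs.det = (Uᴴ * A * U).det := by rw [← Matrix.det_mul, hGs2]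
  have hdetGs : IsUnit Gs.det := by
    have h3 : 0 < (Uᴴ * A * U).det := hGpd.det_pos
    have h4 : Gs.det ≠ 0 := by
      intro h
      rw [h, mul_zero] at hdet2
      linarith [hdet2 ▸ h3]
    exact h4.isUnit
  have hGsinv : Gs * Gs⁻¹ = 1 := Matrix.mul_nonsing_inv _ hdetGs
  have hGsinv' : Gs⁻¹ * Gs = 1 := Matrix.nonsing_inv_mul _ hdetGs
  have hGsinvH : (Gs⁻¹)ᴴ = Gs⁻¹ := by
    rw [Matrix.conjTranspose_nonsing_inv, hGsH]
  set O : Matrix (Fin m) (Fin k) ℝ := W * Gs⁻¹ with hOdef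
  have hOO : Oᴴ * O = 1 := by
    rw [hOdef, Matrix.conjTranspose_mul, hGsinvH]
    calc Gs⁻¹ * Wᴴ * (W * Gs⁻¹) = Gs⁻¹ * (Wᴴ * W) * Gs⁻¹ := by simp only [Matrix.mul_assoc]
    _ = Gs⁻¹ * (Gs * Gs) * Gs⁻¹ := by rw [hG, ← hGs2]
    _ = (Gs⁻¹ * Gs) * (Gs * Gs⁻¹) := by simp only [Matrix.mul_assoc]
    _ = 1 := by rw [hGsinv, hGsinv', Matrix.mul_one]
  refine ⟨O, hOO, ?_⟩
  have hmid : Uᴴ * (SA * B * SA) * U = Wᴴ * B * W := by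
    rw [hWdef, Matrix.conjTranspose_mul, hSAH]
    simp only [Matrix.mul_assoc]
  have hWBW : Wᴴ * B * W = Gs * (Oᴴ * B * O) * Gs := by
    have hexp : Oᴴ = Gs⁻¹ * Wᴴ := by rw [hOdef, Matrix.conjTranspose_mul, hGsinvH]
    rw [hexp, hOdef]
    have hassoc : Gs * (Gs⁻¹ * Wᴴ * B * (W * Gs⁻¹)) * Gs
        = (Gs * Gs⁻¹) * (Wᴴ * B * W) * (Gs⁻¹ * Gs) := by
      simp only [Matrix.mul_assoc]
    rw [hassoc, hGsinv, hGsinv', Matrix.one_mul, Matrix.mul_one]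
  rw [hmid, hWBW, Matrix.det_mul, Matrix.det_mul]
  calc Gs.det * (Oᴴ * B * O).det * Gs.det
      = (Gs.det * Gs.det) * (Oᴴ * B * O).det := by ring
  _ = (Uᴴ * A * U).det * (Oᴴ * B * O).det := by rw [hdet2]

lemma det_eq_prod_real {m : ℕ} {A : Matrix (Fin m) (Fin m) ℝ} (hA : A.IsHermitian) :
    A.det = ∏ i, hA.eigenvalues i := by
  have h := hA.det_eq_prod_eigenvalues
  simpa [RCLike.ofReal_real_eq_id] using h

/-- Lemma D: Gelfand–Naimark type subset bound, logarithmic form. -/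
lemma gn_subset {m : ℕ} {A B : Matrix (Fin m) (Fin m) ℝ} (hA : A.PosDef) (hB : B.PosDef)
    {CM : Matrix (Fin m) (Fin m) ℝ}
    (hCMdef : CM = hA.posSemidef.sqrt * B * hA.posSemidef.sqrt)
    (hC : CM.PosDef) (S : Finset (Fin m)) :
    ∃ S1 S2 : Finset (Fin m), S1.card = S.card ∧ S2.card = S.card ∧
      ∑ i ∈ S, Real.log (hC.1.eigenvalues i)
        ≤ ∑ i ∈ S1, Real.log (hA.1.eigenvalues i)
          + ∑ i ∈ S2, Real.log (hB.1.eigenvalues i) := by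
  classical
  obtain ⟨U, hUU, hUdet⟩ := selection_frame hC.1 S rfl
  obtain ⟨O, hOO, hdec⟩ := det_decompose hA B hUU
  have hk : S.card ≤ m := by simpa using Finset.card_le_card (Finset.subset_univ S)
  obtain ⟨S1, hS1card, hS1⟩ := compression_det_le hA.1 hUU hk
  obtain ⟨S2, hS2card, hS2⟩ := compression_det_le hB.1 hOO hk
  have hCpos : ∀ i, 0 < hC.1.eigenvalues i := fun i => hC.eigenvalues_pos i
  have hApos : ∀ i, 0 < hA.1.eigenvalues i := fun i => hA.eigenvalues_pos i
  have hBpos : ∀ i, 0 < hB.1.eigenvalues i := fun i => hB.eigenvalues_pos i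
  have hprodC : (0:ℝ) < ∏ i ∈ S, hC.1.eigenvalues i :=
    Finset.prod_pos (fun i _ => hCpos i)
  have hprodA : (0:ℝ) < ∏ i ∈ S1, hA.1.eigenvalues i :=
    Finset.prod_pos (fun i _ => hApos i)
  have hprodB : (0:ℝ) < ∏ i ∈ S2, hB.1.eigenvalues i :=
    Finset.prod_pos (fun i _ => hBpos i)
  have hub : ∏ i ∈ S, hC.1.eigenvalues i
      ≤ (∏ i ∈ S1, hA.1.eigenvalues i) * (∏ i ∈ S2, hB.1.eigenvalues i) := by
    rw [← hUdet]
    have hd : (Uᴴ * CM * U).det = (Uᴴ * A * U).det * (Oᴴ * B * O).det := by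
      rw [hCMdef]; exact hdec
    rw [hd]
    apply mul_le_mul hS1 hS2
    · exact psd_det_nonneg ((hB.posSemidef).conjTranspose_mul_mul_same O)
    · exact le_trans (psd_det_nonneg ((hA.posSemidef).conjTranspose_mul_mul_same U)) hS1
  refine ⟨S1, S2, hS1card, hS2card, ?_⟩
  have hlog := Real.log_le_log hprodC hub
  rw [Real.log_mul (ne_of_gt hprodA) (ne_of_gt hprodB)] at hlog
  rw [Real.log_prod (fun i _ => ne_of_gt (hCpos i)),
    Real.log_prod (fun i _ => ne_of_gt (hApos i)),
    Real.log_prod (fun i _ => ne_of_gt (hBpos i))] at hlog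
  exact hlog

lemma eig_ms_similar {m : ℕ} {A B : Matrix (Fin m) (Fin m) ℝ}
    (hA : A.IsHermitian) (hB : B.IsHermitian) (P : Matrix (Fin m) (Fin m) ℝ)
    (hP : IsUnit P.det) (h : B = P * A * P⁻¹) :
    Finset.univ.val.map hB.eigenvalues = Finset.univ.val.map hA.eigenvalues := by
  rw [eig_multiset_eq_roots hA, eig_multiset_eq_roots hB, h, charpoly_conj_eq _ _ hP]

end GN


section Assemble

variable {m : ℕ} {P Q R : Matrix (Fin m) (Fin m) ℝ}

lemma sqrt_herm (hP : P.PosDef) : (hP.posSemidef.sqrt)ᴴ = hP.posSemidef.sqrt :=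
  hP.posSemidef.isHermitian_sqrt

lemma sqrt_mul_self' (hP : P.PosDef) : hP.posSemidef.sqrt * hP.posSemidef.sqrt = P :=
  hP.posSemidef.sqrt_mul_self

lemma sqrt_det_unit (hP : P.PosDef) : IsUnit (hP.posSemidef.sqrt).det := by
  have h1 : (hP.posSemidef.sqrt).det * (hP.posSemidef.sqrt).det = P.det := by
    rw [← Matrix.det_mul, sqrt_mul_self' hP]
  have h2 : P.det ≠ 0 := ne_of_gt hP.det_pos
  have h3 : (hP.posSemidef.sqrt).det ≠ 0 := by
    intro h
    rw [h, mul_zero] at h1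
    exact h2 h1.symm
  exact h3.isUnit

lemma sqrt_inv_cancel (hP : P.PosDef) :
    hP.posSemidef.sqrt * (hP.posSemidef.sqrt)⁻¹ = 1 :=
  Matrix.mul_nonsing_inv _ (sqrt_det_unit hP)

lemma sqrt_inv_cancel' (hP : P.PosDef) :
    (hP.posSemidef.sqrt)⁻¹ * hP.posSemidef.sqrt = 1 :=
  Matrix.nonsing_inv_mul _ (sqrt_det_unit hP)

lemma sqrt_inv_herm (hP : P.PosDef) :
    ((hP.posSemidef.sqrt)⁻¹)ᴴ = (hP.posSemidef.sqrt)⁻¹ := by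
  rw [Matrix.conjTranspose_nonsing_inv, sqrt_herm hP]

lemma sqrt_inv_inj (hP : P.PosDef) :
    ∀ x : Fin m → ℝ, (hP.posSemidef.sqrt)⁻¹ *ᵥ x = 0 → x = 0 := by
  intro x hx
  have h : (hP.posSemidef.sqrt * (hP.posSemidef.sqrt)⁻¹) *ᵥ x = 0 := by
    rw [← Matrix.mulVec_mulVec, hx, Matrix.mulVec_zero]
  rwa [sqrt_inv_cancel hP, Matrix.one_mulVec] at h

lemma mpq_posdef (hP : P.PosDef) (hQ : Q.PosDef) :
    ((hP.posSemidef.sqrt)⁻¹ * Q * (hP.posSemidef.sqrt)⁻¹).PosDef := by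
  have h := posdef_conj hQ ((hP.posSemidef.sqrt)⁻¹) (sqrt_inv_inj hP)
  rwa [sqrt_inv_herm hP] at h

lemma mpq_eq_one_iff (hP : P.PosDef) (hQ : Q.PosDef) :
    (hP.posSemidef.sqrt)⁻¹ * Q * (hP.posSemidef.sqrt)⁻¹ = 1 ↔ P = Q := by
  set SP := hP.posSemidef.sqrt with hSP
  constructor
  · intro h
    have h2 : SP * ((SP)⁻¹ * Q * (SP)⁻¹) * SP = SP * 1 * SP := by rw [h]
    have h3 : SP * (SP⁻¹ * Q * SP⁻¹) * SP = (SP * SP⁻¹) * Q * (SP⁻¹ * SP) := by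
      simp only [Matrix.mul_assoc]
    rw [h3, sqrt_inv_cancel hP, sqrt_inv_cancel' hP, Matrix.one_mul, Matrix.mul_one,
      Matrix.mul_one, sqrt_mul_self' hP] at h2
    exact h2.symm
  · intro h
    subst h
    calc SP⁻¹ * P * SP⁻¹ = SP⁻¹ * (SP * SP) * SP⁻¹ := by rw [sqrt_mul_self' hP]
    _ = (SP⁻¹ * SP) * (SP * SP⁻¹) := by simp only [Matrix.mul_assoc]
    _ = 1 := by rw [sqrt_inv_cancel hP, sqrt_inv_cancel' hP, Matrix.mul_one]

lemma eig_of_one {M : Matrix (Fin m) (Fin m) ℝ} (hM : M.IsHermitian) (h : M = 1) :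
    ∀ i, hM.eigenvalues i = 1 := by
  have hms := eig_multiset_of_conj hM 1 (by simp) (fun _ => (1:ℝ))
    (by rw [h]; simp)
  intro i
  have hmem : hM.eigenvalues i ∈ Finset.univ.val.map hM.eigenvalues :=
    Multiset.mem_map_of_mem _ (Finset.mem_val.mpr (Finset.mem_univ i))
  rw [hms] at hmem
  obtain ⟨j, _, hj⟩ := Multiset.mem_map.mp hmem
  exact hj.symm

lemma one_of_eig_one {M : Matrix (Fin m) (Fin m) ℝ} (hM : M.IsHermitian)
    (h : ∀ i, hM.eigenvalues i = 1) : M = 1 := by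
  obtain ⟨hVV, hVV', hVdiag⟩ := unitary_facts hM
  set V : Matrix (Fin m) (Fin m) ℝ := (hM.eigenvectorUnitary : Matrix (Fin m) (Fin m) ℝ)
  have hdiag1 : diagonal hM.eigenvalues = 1 := by
    have : hM.eigenvalues = fun _ => 1 := funext h
    rw [this]
    exact Matrix.diagonal_one
  have hMV : M = V * (Vᴴ * M * V) * Vᴴ := by
    calc M = 1 * M * 1 := by rw [Matrix.one_mul, Matrix.mul_one]
    _ = (V * Vᴴ) * M * (V * Vᴴ) := by rw [hVV]
    _ = V * (Vᴴ * M * V) * Vᴴ := by simp only [Matrix.mul_assoc]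
  rw [hMV, hVdiag, hdiag1, Matrix.mul_one, hVV]

/-- Spectral decomposition in conjugation form. -/
lemma spec_conj {M : Matrix (Fin m) (Fin m) ℝ} (hM : M.IsHermitian) :
    M = (hM.eigenvectorUnitary : Matrix (Fin m) (Fin m) ℝ) * diagonal hM.eigenvalues *
      (hM.eigenvectorUnitary : Matrix (Fin m) (Fin m) ℝ)⁻¹ ∧
    IsUnit ((hM.eigenvectorUnitary : Matrix (Fin m) (Fin m) ℝ)).det := by
  obtain ⟨hVV, hVV', hVdiag⟩ := unitary_facts hM
  set V : Matrix (Fin m) (Fin m) ℝ := (hM.eigenvectorUnitary : Matrix (Fin m) (Fin m) ℝ)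
  have hVdet : IsUnit V.det := Matrix.isUnit_det_of_right_inverse hVV
  have hVinv : V⁻¹ = Vᴴ := Matrix.inv_eq_right_inv hVV
  refine ⟨?_, hVdet⟩
  rw [hVinv]
  calc M = 1 * M * 1 := by rw [Matrix.one_mul, Matrix.mul_one]
  _ = (V * Vᴴ) * M * (V * Vᴴ) := by rw [hVV]
  _ = V * (Vᴴ * M * V) * Vᴴ := by simp only [Matrix.mul_assoc]
  _ = V * diagonal hM.eigenvalues * Vᴴ := by rw [hVdiag]

/-- Eigenvalue multiset of the symmetric vvd matrix is inverted. -/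
lemma eig_symm_ms (hP : P.PosDef) (hQ : Q.PosDef) :
    Finset.univ.val.map (mpq_posdef hQ hP).1.eigenvalues
      = (Finset.univ.val.map (mpq_posdef hP hQ).1.eigenvalues).map (·⁻¹) := by
  classical
  set SP := hP.posSemidef.sqrt with hSPdef
  set SQ := hQ.posSemidef.sqrt with hSQdef
  set A := SP⁻¹ * Q * SP⁻¹ with hAdef
  set B := SQ⁻¹ * P * SQ⁻¹ with hBdef
  have hApd : A.PosDef := mpq_posdef hP hQ
  have hBpd : B.PosDef := mpq_posdef hQ hP
  obtain ⟨hAspec, hVdet⟩ := spec_conj hApd.1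
  set V : Matrix (Fin m) (Fin m) ℝ := (hApd.1.eigenvectorUnitary : Matrix (Fin m) (Fin m) ℝ)
  set lam := hApd.1.eigenvalues with hlam
  have hAdet : IsUnit A.det := hApd.det_pos.ne'.isUnit
  -- A⁻¹ in diagonal form
  have hlampos : ∀ i, 0 < lam i := fun i => hApd.eigenvalues_pos i
  have hdiaginv : (diagonal lam)⁻¹ = diagonal (fun i => (lam i)⁻¹) := by
    apply Matrix.inv_eq_right_inv
    rw [Matrix.diagonal_mul_diagonal]
    have : (fun i => lam i * (lam i)⁻¹) = fun _ : Fin m => (1:ℝ) := by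
      funext i
      exact mul_inv_cancel₀ (ne_of_gt (hlampos i))
    rw [this, Matrix.diagonal_one]
  have hAinv : A⁻¹ = V * diagonal (fun i => (lam i)⁻¹) * V⁻¹ := by
    conv_lhs => rw [hAspec]
    rw [Matrix.mul_inv_rev, Matrix.mul_inv_rev]
    rw [Matrix.nonsing_inv_nonsing_inv _ hVdet, hdiaginv]
    simp only [Matrix.mul_assoc]
  -- A⁻¹ explicitly: SP * Q⁻¹ * SP
  have hQdet : IsUnit Q.det := hQ.det_pos.ne'.isUnit
  have hQQ : Q * Q⁻¹ = 1 := Matrix.mul_nonsing_inv _ hQdet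
  have hAinv2 : A⁻¹ = SP * Q⁻¹ * SP := by
    apply Matrix.inv_eq_right_inv
    calc SP⁻¹ * Q * SP⁻¹ * (SP * Q⁻¹ * SP)
        = SP⁻¹ * Q * (SP⁻¹ * SP) * Q⁻¹ * SP := by simp only [Matrix.mul_assoc]
    _ = SP⁻¹ * (Q * Q⁻¹) * SP := by
        rw [sqrt_inv_cancel' hP]
        simp only [Matrix.mul_one, Matrix.mul_assoc]
    _ = 1 := by rw [hQQ, Matrix.mul_one, sqrt_inv_cancel' hP]
  -- conjugating matrix
  set G := SQ⁻¹ * SP with hGdef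
  have hGright : G * (SP⁻¹ * SQ) = 1 := by
    calc SQ⁻¹ * SP * (SP⁻¹ * SQ) = SQ⁻¹ * (SP * SP⁻¹) * SQ := by simp only [Matrix.mul_assoc]
    _ = 1 := by rw [sqrt_inv_cancel hP, Matrix.mul_one, sqrt_inv_cancel' hQ]
  have hGdet : IsUnit G.det := Matrix.isUnit_det_of_right_inverse hGright
  have hGinv : G⁻¹ = SP⁻¹ * SQ := Matrix.inv_eq_right_inv hGright
  -- Q⁻¹ = SQ⁻¹ * SQ⁻¹
  have hQinv : Q⁻¹ = SQ⁻¹ * SQ⁻¹ := by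
    apply Matrix.inv_eq_left_inv
    calc SQ⁻¹ * SQ⁻¹ * Q = SQ⁻¹ * SQ⁻¹ * (SQ * SQ) := by rw [sqrt_mul_self' hQ]
    _ = SQ⁻¹ * (SQ⁻¹ * SQ) * SQ := by simp only [Matrix.mul_assoc]
    _ = 1 := by rw [sqrt_inv_cancel' hQ, Matrix.mul_one, sqrt_inv_cancel' hQ]
  have hBsim1 : G * A⁻¹ * G⁻¹ = B := by
    rw [hAinv2, hGinv, hGdef]
    simp only [← Matrix.mul_assoc]
    rw [Matrix.mul_assoc SQ⁻¹ SP SP, sqrt_mul_self' hP]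
    rw [Matrix.mul_assoc (SQ⁻¹ * P * Q⁻¹) SP SP⁻¹, sqrt_inv_cancel hP, Matrix.mul_one]
    rw [hQinv, ← Matrix.mul_assoc (SQ⁻¹ * P) SQ⁻¹ SQ⁻¹]
    rw [Matrix.mul_assoc (SQ⁻¹ * P * SQ⁻¹) SQ⁻¹ SQ, sqrt_inv_cancel' hQ, Matrix.mul_one]
  have hBsim : B = (G * V) * diagonal (fun i => (lam i)⁻¹) * (G * V)⁻¹ := by
    rw [Matrix.mul_inv_rev G V, ← hBsim1, hAinv]
    simp only [Matrix.mul_assoc]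
  have hGVdet : IsUnit (G * V).det := by
    rw [Matrix.det_mul]
    exact hGdet.mul hVdet
  have hms := eig_multiset_of_conj hBpd.1 (G * V) hGVdet _ hBsim
  rw [hms, Multiset.map_map]
  rfl

lemma sum_log_eig (hP : P.PosDef) (hQ : Q.PosDef) :
    ∑ i, Real.log ((mpq_posdef hP hQ).1.eigenvalues i)
      = Real.log Q.det - Real.log P.det := by
  have hpd := mpq_posdef hP hQ
  have hpos : ∀ i, 0 < hpd.1.eigenvalues i := fun i => hpd.eigenvalues_pos i
  rw [← Real.log_prod (fun i _ => ne_of_gt (hpos i))]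
  rw [← det_eq_prod_real hpd.1]
  rw [Matrix.det_mul, Matrix.det_mul, Matrix.det_nonsing_inv, Ring.inverse_eq_inv]
  set s := (hP.posSemidef.sqrt).det with hs
  have hs2 : s * s = P.det := by rw [hs, ← Matrix.det_mul, sqrt_mul_self' hP]
  have hform : s⁻¹ * Q.det * s⁻¹ = Q.det * (P.det)⁻¹ := by
    rw [← hs2]
    field_simp
  rw [hform, Real.log_mul (ne_of_gt hQ.det_pos) (inv_ne_zero (ne_of_gt hP.det_pos)),
    Real.log_inv]
  ring

lemma tri_data (hP : P.PosDef) (hQ : Q.PosDef) (hR : R.PosDef) :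
    ∀ S : Finset (Fin m), ∃ S1 S2 : Finset (Fin m), S1.card = S.card ∧ S2.card = S.card ∧
      ∑ i ∈ S, Real.log ((mpq_posdef hP hR).1.eigenvalues i)
        ≤ ∑ i ∈ S1, Real.log ((mpq_posdef hP hQ).1.eigenvalues i)
          + ∑ i ∈ S2, Real.log ((mpq_posdef hQ hR).1.eigenvalues i) := by
  classical
  set SP := hP.posSemidef.sqrt with hSPdef
  set SQ := hQ.posSemidef.sqrt with hSQdef
  set A := SP⁻¹ * Q * SP⁻¹ with hAdef
  set B := SQ⁻¹ * R * SQ⁻¹ with hBdef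
  set C := SP⁻¹ * R * SP⁻¹ with hCdef
  have hApd : A.PosDef := mpq_posdef hP hQ
  have hBpd : B.PosDef := mpq_posdef hQ hR
  have hCpd : C.PosDef := mpq_posdef hP hR
  set T := hBpd.posSemidef.sqrt with hTdef
  have hTH : Tᴴ = T := sqrt_herm hBpd
  have hTT : T * T = B := sqrt_mul_self' hBpd
  have hTdet : IsUnit T.det := sqrt_det_unit hBpd
  set G := SP⁻¹ * SQ with hGdef
  have hGright : G * (SQ⁻¹ * SP) = 1 := by
    calc SP⁻¹ * SQ * (SQ⁻¹ * SP) = SP⁻¹ * (SQ * SQ⁻¹) * SP := by simp only [Matrix.mul_assoc]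
    _ = 1 := by rw [sqrt_inv_cancel hQ, Matrix.mul_one, sqrt_inv_cancel' hP]
  have hGleft : (SQ⁻¹ * SP) * G = 1 := by
    calc SQ⁻¹ * SP * (SP⁻¹ * SQ) = SQ⁻¹ * (SP * SP⁻¹) * SQ := by simp only [Matrix.mul_assoc]
    _ = 1 := by rw [sqrt_inv_cancel hP, Matrix.mul_one, sqrt_inv_cancel' hQ]
  have hGdet : IsUnit G.det := Matrix.isUnit_det_of_right_inverse hGright
  have hGinv : G⁻¹ = SQ⁻¹ * SP := Matrix.inv_eq_right_inv hGright
  have hGH : Gᴴ = SQ * SP⁻¹ := by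
    rw [hGdef, Matrix.conjTranspose_mul, sqrt_inv_herm hP, sqrt_herm hQ]
  have hGinj : ∀ x : Fin m → ℝ, G *ᵥ x = 0 → x = 0 := by
    intro x hx
    have h : ((SQ⁻¹ * SP) * G) *ᵥ x = 0 := by
      rw [← Matrix.mulVec_mulVec, hx, Matrix.mulVec_zero]
    rwa [hGleft, Matrix.one_mulVec] at h
  set D2 := Gᴴ * G with hD2def
  have hD2pd : D2.PosDef := by
    have h1 := posdef_conj (Matrix.PosDef.one (n := Fin m) (R := ℝ)) G hGinj
    rwa [Matrix.mul_one] at h1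
  have hTinj : ∀ x : Fin m → ℝ, T *ᵥ x = 0 → x = 0 := by
    intro x hx
    have h : (T⁻¹ * T) *ᵥ x = 0 := by
      rw [← Matrix.mulVec_mulVec, hx, Matrix.mulVec_zero]
    rwa [Matrix.nonsing_inv_mul _ hTdet, Matrix.one_mulVec] at h
  set C' := T * D2 * T with hC'def
  have hC'pd : C'.PosDef := by
    have h := posdef_conj hD2pd T hTinj
    rwa [hTH] at h
  have hCGB : C = G * B * Gᴴ := by
    rw [hGdef, hGH, hBdef]
    simp only [← Matrix.mul_assoc]
    rw [Matrix.mul_assoc SP⁻¹ SQ SQ⁻¹, sqrt_inv_cancel hQ, Matrix.mul_one]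
    rw [Matrix.mul_assoc (SP⁻¹ * R) SQ⁻¹ SQ, sqrt_inv_cancel' hQ, Matrix.mul_one]
  set X := G * T with hXdef
  have hXdet : IsUnit X.det := by
    rw [hXdef, Matrix.det_mul]
    exact hGdet.mul hTdet
  have hCXY : C = X * (T * Gᴴ) := by
    rw [hXdef, hCGB, ← hTT]
    simp only [Matrix.mul_assoc]
  have hC'YX : C' = (T * Gᴴ) * X := by
    rw [hXdef, hC'def, hD2def]
    simp only [Matrix.mul_assoc]
  have hsim : C = X * C' * X⁻¹ := by
    rw [hC'YX]
    have hXX : X * X⁻¹ = 1 := Matrix.mul_nonsing_inv _ hXdet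
    have h2 : X * ((T * Gᴴ) * X) * X⁻¹ = X * (T * Gᴴ) * (X * X⁻¹) := by
      simp only [Matrix.mul_assoc]
    rw [h2, hXX, Matrix.mul_one]
    exact hCXY
  have hmsC : Finset.univ.val.map hCpd.1.eigenvalues
      = Finset.univ.val.map hC'pd.1.eigenvalues :=
    eig_ms_similar hC'pd.1 hCpd.1 X hXdet hsim
  have hsimA : A = G * D2 * G⁻¹ := by
    have hGGH : G * Gᴴ = A := by
      rw [hGdef, hGH, hAdef]
      calc SP⁻¹ * SQ * (SQ * SP⁻¹) = SP⁻¹ * (SQ * SQ) * SP⁻¹ := by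
            simp only [Matrix.mul_assoc]
      _ = SP⁻¹ * Q * SP⁻¹ := by rw [sqrt_mul_self' hQ]
    have h3 : G * D2 * G⁻¹ = A := by
      rw [hD2def, hGinv]
      calc G * (Gᴴ * G) * (SQ⁻¹ * SP) = (G * Gᴴ) * (G * (SQ⁻¹ * SP)) := by
            simp only [Matrix.mul_assoc]
      _ = A := by rw [hGGH, hGright, Matrix.mul_one]
    exact h3.symm
  have hmsA : Finset.univ.val.map hApd.1.eigenvalues
      = Finset.univ.val.map hD2pd.1.eigenvalues :=
    eig_ms_similar hD2pd.1 hApd.1 G hGdet hsimA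
  have hlog_of_ms : ∀ {f g : Fin m → ℝ}, Finset.univ.val.map f = Finset.univ.val.map g →
      Finset.univ.val.map (fun i => Real.log (f i)) = Finset.univ.val.map (fun i => Real.log (g i)) := by
    intro f g h
    have h1 : Finset.univ.val.map (fun i => Real.log (f i))
        = (Finset.univ.val.map f).map Real.log := by
      rw [Multiset.map_map]; rfl
    have h2 : Finset.univ.val.map (fun i => Real.log (g i))
        = (Finset.univ.val.map g).map Real.log := by
      rw [Multiset.map_map]; rfl
    rw [h1, h2, h]
  obtain ⟨σ, hσ⟩ := exists_perm_of_multiset_eq (hlog_of_ms hmsC)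
  obtain ⟨τ, hτ⟩ := exists_perm_of_multiset_eq (hlog_of_ms hmsA)
  intro S
  have hsum1 : ∑ i ∈ S, Real.log (hCpd.1.eigenvalues i)
      = ∑ j ∈ S.image σ, Real.log (hC'pd.1.eigenvalues j) := by
    rw [Finset.sum_image (fun a _ b _ h => σ.injective h)]
    apply Finset.sum_congr rfl
    intro i _
    exact congrFun hσ i
  obtain ⟨S1', S2', hc1, hc2, hineq⟩ := gn_subset hBpd hD2pd hC'def hC'pd (S.image σ)
  have hcardim : (S.image σ).card = S.card :=
    Finset.card_image_of_injective _ σ.injective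
  have hsum2 : ∑ j ∈ S2'.image τ.symm, Real.log (hApd.1.eigenvalues j)
      = ∑ i ∈ S2', Real.log (hD2pd.1.eigenvalues i) := by
    rw [Finset.sum_image (fun a _ b _ h => τ.symm.injective h)]
    apply Finset.sum_congr rfl
    intro i _
    have := congrFun hτ (τ.symm i)
    simpa using this
  refine ⟨S2'.image τ.symm, S1', ?_, ?_, ?_⟩
  · rw [Finset.card_image_of_injective _ τ.symm.injective, hc2, hcardim]
  · rw [hc1, hcardim]
  · rw [hsum1, hsum2]
    calc ∑ j ∈ S.image σ, Real.log (hC'pd.1.eigenvalues j)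
        ≤ ∑ i ∈ S1', Real.log (hBpd.1.eigenvalues i)
          + ∑ i ∈ S2', Real.log (hD2pd.1.eigenvalues i) := hineq
    _ = ∑ i ∈ S2', Real.log (hD2pd.1.eigenvalues i)
          + ∑ i ∈ S1', Real.log (hBpd.1.eigenvalues i) := by ring

end Assemble

end VVD

end Infra

/-- Any permutation-invariant norm `N` on `ℝⁿ`, applied to the vector-valued distance,
induces a metric on the set of real symmetric positive definite matrices. -/
theorem vvd_norm_is_metric {n : ℕ} (N : (Fin n → ℝ) → ℝ)
    (hN0 : ∀ v, N v = 0 ↔ v = 0)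
    (hNsmul : ∀ (a : ℝ) (v : Fin n → ℝ), N (a • v) = |a| * N v)
    (hNadd : ∀ u v, N (u + v) ≤ N u + N v)
    (hNperm : ∀ (σ : Equiv.Perm (Fin n)) (v : Fin n → ℝ), N (v ∘ σ) = N v) :
    ∀ (P Q R : Matrix (Fin n) (Fin n) ℝ)
      (hP : P.PosDef) (hQ : Q.PosDef) (hR : R.PosDef),
      0 ≤ N (dvv P Q hP hQ)
      ∧ (N (dvv P Q hP hQ) = 0 ↔ P = Q)
      ∧ N (dvv P Q hP hQ) = N (dvv Q P hQ hP)
      ∧ N (dvv P R hP hR) ≤ N (dvv P Q hP hQ) + N (dvv Q R hQ hR) := by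
  intro P Q R hP hQ hR
  refine ⟨VVD.norm_nonneg' N hN0 hNsmul hNadd _, ?_, ?_, ?_⟩
  · constructor
    · intro h
      have hdvv0 : dvv P Q hP hQ = 0 := (hN0 _).mp h
      have hpd := VVD.mpq_posdef hP hQ
      have hall : ∀ i, (sqrtConj_isHermitian hP hQ).eigenvalues i = 1 := by
        intro i
        have hlog : Real.log ((sqrtConj_isHermitian hP hQ).eigenvalues i) = 0 :=
          congrFun hdvv0 i
        have hposi : 0 < (sqrtConj_isHermitian hP hQ).eigenvalues i := hpd.eigenvalues_pos i
        rcases Real.log_eq_zero.mp hlog with h0 | h1 | hm1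
        · linarith
        · exact h1
        · linarith
      exact (VVD.mpq_eq_one_iff hP hQ).mp (VVD.one_of_eig_one _ hall)
    · intro h
      have hone : (hP.posSemidef.sqrt)⁻¹ * Q * (hP.posSemidef.sqrt)⁻¹ = 1 :=
        (VVD.mpq_eq_one_iff hP hQ).mpr h
      have hall := VVD.eig_of_one (sqrtConj_isHermitian hP hQ) hone
      have hz : dvv P Q hP hQ = 0 := by
        funext i
        show Real.log ((sqrtConj_isHermitian hP hQ).eigenvalues i) = 0
        rw [hall i, Real.log_one]
      rw [hz]
      exact (hN0 0).mpr rfl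
  · have hms := VVD.eig_symm_ms hP hQ
    have hms2 : Finset.univ.val.map
        (fun i => Real.log ((sqrtConj_isHermitian hQ hP).eigenvalues i))
        = Finset.univ.val.map
          (fun i => - Real.log ((sqrtConj_isHermitian hP hQ).eigenvalues i)) := by
      have h1 : Finset.univ.val.map
          (fun i => Real.log ((sqrtConj_isHermitian hQ hP).eigenvalues i))
          = (Finset.univ.val.map (VVD.mpq_posdef hQ hP).1.eigenvalues).map Real.log := by
        rw [Multiset.map_map]; rfl
      have h2 : Finset.univ.val.map
          (fun i => - Real.log ((sqrtConj_isHermitian hP hQ).eigenvalues i))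
          = ((Finset.univ.val.map (VVD.mpq_posdef hP hQ).1.eigenvalues).map (·⁻¹)).map Real.log := by
        rw [Multiset.map_map, Multiset.map_map]
        apply Multiset.map_congr rfl
        intro i _
        simp [Real.log_inv]
      rw [h1, h2, hms]
    obtain ⟨σ, hσ⟩ := VVD.exists_perm_of_multiset_eq hms2
    have hfun : dvv Q P hQ hP = (-(dvv P Q hP hQ)) ∘ σ := by
      funext i
      have h := congrFun hσ i
      simpa [dvv] using h
    calc N (dvv P Q hP hQ) = N (-(dvv P Q hP hQ)) := (VVD.norm_neg' N hNsmul _).symm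
    _ = N ((-(dvv P Q hP hQ)) ∘ σ) := (hNperm σ _).symm
    _ = N (dvv Q P hQ hP) := by rw [← hfun]
  · apply VVD.key_norm N hNsmul hNadd hNperm
    · have h1 : ∑ i, dvv P R hP hR i = Real.log R.det - Real.log P.det :=
        VVD.sum_log_eig hP hR
      have h2 : ∑ i, dvv P Q hP hQ i = Real.log Q.det - Real.log P.det :=
        VVD.sum_log_eig hP hQ
      have h3 : ∑ i, dvv Q R hQ hR i = Real.log R.det - Real.log Q.det :=
        VVD.sum_log_eig hQ hR
      rw [h1, h2, h3]
      ring
    · intro S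
      obtain ⟨S1, S2, hc1, hc2, hle⟩ := VVD.tri_data hP hQ hR S
      exact ⟨S1, S2, hc1, hc2, hle⟩
end
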